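/- arXiv:2407.11694 — 6 statements merged into one kernel-verified Lean document; each statement's English description precedes it below -/
import Mathlib

section
/- Let ψ^new = β * ψ where ψ is the Dedekind psi function and β is the multiplicative function with β(p) = -2, β(p²) = 1, β(p^r) = 0 for r ≥ 3. Then for all N ≥ 1, ψ^new(N) ≥ N / π₁(N), where π₁(N) = ∏_{p | N} (1 + (p+1)/(p² - p - 1)). -/
open ArithmeticFunction

theorem stmt_2 (β ψ : ArithmeticFunction ℤ)
    (hβ : β.IsMultiplicative)
    (hβ1 : ∀ p : ℕ, p.Prime → β p = -2)
    (hβ2 : ∀ p : ℕ, p.Prime → β (p ^ 2) = 1)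
    (hβ3 : ∀ p r : ℕ, p.Prime → 3 ≤ r → β (p ^ r) = 0)
    (hψ : ψ.IsMultiplicative)
    (hψp : ∀ p r : ℕ, p.Prime → 1 ≤ r → ψ (p ^ r) = (p : ℤ) ^ r + (p : ℤ) ^ (r - 1)) :
    ∀ N : ℕ, 1 ≤ N →
      (N : ℚ) / (∏ p ∈ N.primeFactors, (1 + ((p : ℚ) + 1) / ((p : ℚ) ^ 2 - p - 1)))
        ≤ ((β * ψ) N : ℚ) := by
  intro N hN
  have hN0 : N ≠ 0 := by omega
  have hfm : (β * ψ).IsMultiplicative := hβ.mul hψ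
  -- sum formula for prime powers
  have hsum : ∀ p e : ℕ, p.Prime →
      (β * ψ) (p ^ e) = ∑ i ∈ Finset.range (e + 1), β (p ^ i) * ψ (p ^ (e - i)) := by
    intro p e hp
    rw [ArithmeticFunction.mul_apply, Nat.sum_divisorsAntidiagonal (f := fun x y => β x * ψ y),
      Nat.sum_divisors_prime_pow hp]
    refine Finset.sum_congr rfl fun i hi => ?_
    rw [Nat.pow_div (by simpa using Nat.lt_succ_iff.mp (Finset.mem_range.mp hi)) hp.pos]
  -- key integer inequality on prime powers
  have hkey : ∀ p e : ℕ, p.Prime → 1 ≤ e →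
      (p : ℤ) ^ e * ((p : ℤ) ^ 2 - p - 1) ≤ (p : ℤ) ^ 2 * (β * ψ) (p ^ e) := by
    intro p e hp he
    have hp2 : (2 : ℤ) ≤ (p : ℤ) := by exact_mod_cast hp.two_le
    have hβ0 : β 1 = 1 := hβ.map_one
    have hψ0 : ψ 1 = 1 := hψ.map_one
    have hβp : β (p ^ 1) = -2 := by rw [pow_one]; exact hβ1 p hp
    match e, he with
    | 1, _ =>
      rw [hsum p 1 hp]
      simp only [Finset.sum_range_succ, Finset.sum_range_zero, pow_zero, hβ0, hψ0,
        Nat.sub_self, Nat.sub_zero]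
      rw [hβp, hψp p 1 hp le_rfl]
      push_cast
      nlinarith
    | 2, _ =>
      rw [hsum p 2 hp]
      simp only [Finset.sum_range_succ, Finset.sum_range_zero, pow_zero, hβ0, hψ0,
        Nat.sub_self, Nat.sub_zero]
      rw [hβp, hβ2 p hp, hψp p 2 hp (by norm_num), hψp p 1 hp le_rfl]
      norm_num
      nlinarith
    | (k+3), _ =>
      rw [hsum p (k+3) hp]
      have hrestrict : ∑ i ∈ Finset.range (k + 3 + 1), β (p ^ i) * ψ (p ^ (k + 3 - i))
          = ∑ i ∈ Finset.range 3, β (p ^ i) * ψ (p ^ (k + 3 - i)) := by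
        refine (Finset.sum_subset (by intro x hx; simp at hx ⊢; omega) ?_).symm
        intro i _ hi
        rw [hβ3 p i hp (by simp at hi; omega), zero_mul]
      rw [hrestrict]
      simp only [Finset.sum_range_succ, Finset.sum_range_zero, pow_zero, hβ0, hψ0]
      simp only [show k+3-0 = k+3 from rfl, show k+3-1 = k+2 from rfl,
        show k+3-2 = k+1 from rfl]
      rw [hβp, hβ2 p hp, hψp p (k+3) hp (by omega), hψp p (k+2) hp (by omega),
        hψp p (k+1) hp (by omega)]
      simp only [show k+3-1 = k+2 from rfl, show k+2-1 = k+1 from rfl, show k+1-1 = k from rfl]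
      ring_nf
      nlinarith [pow_nonneg (show (0:ℤ) ≤ p by linarith) k, sq_nonneg ((p:ℤ)^k)]
  -- assembly
  have hNprod : (N : ℚ) = ∏ p ∈ N.primeFactors, (p : ℚ) ^ (N.factorization p) := by
    conv_lhs => rw [← Nat.factorization_prod_pow_eq_self hN0]
    rw [Nat.prod_factorization_eq_prod_primeFactors]
    push_cast
    rfl
  have hfprod : ((β * ψ) N : ℚ)
      = ∏ p ∈ N.primeFactors, (((β * ψ) (p ^ (N.factorization p)) : ℤ) : ℚ) := by
    rw [hfm.multiplicative_factorization _ hN0, Nat.prod_factorization_eq_prod_primeFactors]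
    push_cast
    rfl
  rw [hNprod, hfprod, ← Finset.prod_div_distrib]
  have key : ∀ p ∈ N.primeFactors,
      (0:ℚ) < 1 + ((p : ℚ) + 1) / ((p : ℚ) ^ 2 - p - 1) ∧
      (p : ℚ) ^ (N.factorization p) / (1 + ((p : ℚ) + 1) / ((p : ℚ) ^ 2 - p - 1))
        ≤ (((β * ψ) (p ^ (N.factorization p)) : ℤ) : ℚ) := by
    intro p hp
    have hpp : p.Prime := Nat.prime_of_mem_primeFactors hp
    have he : 1 ≤ N.factorization p := hpp.factorization_pos_of_dvd hN0
      (Nat.dvd_of_mem_primeFactors hp)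
    have hp2 : (2 : ℚ) ≤ (p : ℚ) := by exact_mod_cast hpp.two_le
    have hd : (0 : ℚ) < (p : ℚ) ^ 2 - p - 1 := by nlinarith
    have hD : (0 : ℚ) < 1 + ((p : ℚ) + 1) / ((p : ℚ) ^ 2 - p - 1) := by positivity
    refine ⟨hD, ?_⟩
    have hZ : ((p : ℚ)) ^ (N.factorization p) * ((p : ℚ) ^ 2 - p - 1)
        ≤ (p : ℚ) ^ 2 * (((β * ψ) (p ^ (N.factorization p)) : ℤ) : ℚ) := by
      exact_mod_cast hkey p (N.factorization p) hpp he
    have hps : (0 : ℚ) < (p : ℚ) ^ 2 := by positivity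
    have hDval : 1 + ((p : ℚ) + 1) / ((p : ℚ) ^ 2 - p - 1)
        = (p : ℚ) ^ 2 / ((p : ℚ) ^ 2 - p - 1) := by
      rw [eq_div_iff hd.ne', add_mul, div_mul_cancel₀ _ hd.ne']; ring
    rw [hDval, div_div_eq_mul_div, div_le_iff₀ hps]
    linarith [hZ]
  refine Finset.prod_le_prod (fun p hp => ?_) (fun p hp => (key p hp).2)
  exact div_nonneg (by positivity) (key p hp).1.le
end

section
/- For every positive integer N, π₁(N) ≤ 12.033 · N^{1/64}, where π₁(N) = ∏_{p | N} (1 + (p+1)/(p² - p - 1)) and the product runs over distinct prime divisors of N. -/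
open Finset Real

private noncomputable def ff (p : ℕ) : ℝ := 1 + ((p : ℝ) + 1) / ((p : ℝ) ^ 2 - p - 1)

private lemma aux_pow (x : ℝ) (hx : 0 ≤ x) : (x ^ (64 : ℕ)) ^ ((1 : ℝ)/64) = x := by
  rw [← Real.rpow_natCast x 64, ← Real.rpow_mul hx]
  norm_num

private lemma aux_le_rpow {c x : ℝ} (hc : 0 ≤ c) (h : c ^ (64 : ℕ) ≤ x) :
    c ≤ x ^ ((1 : ℝ)/64) := by
  calc c = (c ^ (64 : ℕ)) ^ ((1:ℝ)/64) := (aux_pow c hc).symm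
    _ ≤ x ^ ((1:ℝ)/64) := Real.rpow_le_rpow (by positivity) h (by norm_num)

private lemma aux_rpow_le {c x : ℝ} (hc : 0 ≤ c) (hx : 0 ≤ x) (h : x ≤ c ^ (64 : ℕ)) :
    x ^ ((1 : ℝ)/64) ≤ c := by
  calc x ^ ((1:ℝ)/64) ≤ (c ^ (64 : ℕ)) ^ ((1:ℝ)/64) :=
        Real.rpow_le_rpow hx h (by norm_num)
    _ = c := aux_pow c hc

private lemma log23 : (3.1 : ℝ) ≤ Real.log 23 := by
  rw [Real.le_log_iff_exp_le (by norm_num)]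
  have heq : Real.exp (3.1 : ℝ) ^ (10 : ℕ) = Real.exp (31 : ℝ) := by
    rw [← Real.exp_nat_mul]; norm_num
  have h10 : Real.exp (3.1 : ℝ) ^ (10 : ℕ) ≤ (23 : ℝ) ^ (10 : ℕ) := by
    rw [heq]
    calc Real.exp (31 : ℝ) = Real.exp 1 ^ (31 : ℕ) := by
          rw [← Real.exp_nat_mul]; norm_num
      _ ≤ (2.7182818286 : ℝ) ^ (31 : ℕ) :=
          pow_le_pow_left₀ (Real.exp_pos 1).le Real.exp_one_lt_d9.le _
      _ ≤ (23 : ℝ) ^ (10 : ℕ) := by norm_num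
  exact le_of_pow_le_pow_left₀ (by norm_num) (by norm_num) h10

/-- For primes `p ≥ 23`, the factor is at most `p^(1/64)`. -/
private lemma big_prime {p : ℕ} (hp : 23 ≤ p) : ff p ≤ (p : ℝ) ^ ((1 : ℝ)/64) := by
  set x : ℝ := (p : ℝ) with hxdef
  have hx : (23 : ℝ) ≤ x := by rw [hxdef]; exact_mod_cast hp
  have hd : 0 < x ^ 2 - x - 1 := by nlinarith
  have hlog : (3.1 : ℝ) ≤ Real.log x :=
    le_trans log23 (Real.log_le_log (by norm_num) hx)
  have key : (x + 1) / (x ^ 2 - x - 1) ≤ Real.log x / 64 := by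
    rw [div_le_div_iff₀ hd (by norm_num)]
    have h1 : (3.1 : ℝ) * (x ^ 2 - x - 1) ≤ Real.log x * (x ^ 2 - x - 1) := by
      apply mul_le_mul_of_nonneg_right hlog hd.le
    nlinarith
  have h2 : ff p ≤ 1 + Real.log x / 64 := by
    unfold ff; rw [← hxdef]; linarith
  have h3 : 1 + Real.log x / 64 ≤ x ^ ((1:ℝ)/64) := by
    rw [Real.rpow_def_of_pos (by linarith : (0:ℝ) < x)]
    have := Real.add_one_le_exp (Real.log x * (1/64))
    calc 1 + Real.log x / 64 = Real.log x * (1/64) + 1 := by ring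
      _ ≤ Real.exp (Real.log x * (1/64)) := Real.add_one_le_exp _
  linarith

private def FS : Finset ℕ := {2, 3, 5, 7, 11, 13, 17, 19}

/-- For each small prime, `p^(1/64) ≤ ff p`. -/
private lemma small_prime {p : ℕ} (hp : p ∈ FS) : (p : ℝ) ^ ((1 : ℝ)/64) ≤ ff p := by
  fin_cases hp <;>
  · apply aux_rpow_le (by unfold ff; push_cast; norm_num) (by positivity)
    unfold ff; push_cast; norm_num

private lemma ff_nonneg {p : ℕ} (hp : p.Prime) : 0 ≤ ff p := by
  have h2 : (2 : ℝ) ≤ (p : ℝ) := by exact_mod_cast hp.two_le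
  have hd : 0 < (p:ℝ) ^ 2 - p - 1 := by nlinarith
  unfold ff; positivity

private lemma prod_FS_ff : ∏ p ∈ FS, ff p ≤ 12.033 * ∏ p ∈ FS, (p : ℝ) ^ ((1 : ℝ)/64) := by
  have h1 : ∏ p ∈ FS, (p : ℝ) ^ ((1:ℝ)/64) = (9699690 : ℝ) ^ ((1:ℝ)/64) := by
    rw [Real.finset_prod_rpow FS _ (fun i _ => by positivity)]
    norm_num [FS]
  have h2 : ∏ p ∈ FS, ff p = (4 : ℝ) * (9/5) * (25/19) * (49/41) * (121/109) * (169/155) * (289/271) * (361/341) := by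
    unfold ff FS
    norm_num
  rw [h1, h2]
  have h3 : ((4 : ℝ) * (9/5) * (25/19) * (49/41) * (121/109) * (169/155) * (289/271) * (361/341)) / 12.033 ≤ (9699690 : ℝ) ^ ((1:ℝ)/64) := by
    apply aux_le_rpow (by norm_num)
    norm_num
  calc (4 : ℝ) * (9/5) * (25/19) * (49/41) * (121/109) * (169/155) * (289/271) * (361/341)
      = (((4 : ℝ) * (9/5) * (25/19) * (49/41) * (121/109) * (169/155) * (289/271) * (361/341)) / 12.033) * 12.033 := by norm_num
    _ ≤ (9699690 : ℝ) ^ ((1:ℝ)/64) * 12.033 := by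
        apply mul_le_mul_of_nonneg_right h3 (by norm_num)
    _ = 12.033 * (9699690 : ℝ) ^ ((1:ℝ)/64) := mul_comm _ _

/-- subset version -/
private lemma small_part {T : Finset ℕ} (hT : T ⊆ FS) :
    ∏ p ∈ T, ff p ≤ 12.033 * ∏ p ∈ T, (p : ℝ) ^ ((1 : ℝ)/64) := by
  have hQpos : 0 < ∏ p ∈ FS \ T, (p : ℝ) ^ ((1:ℝ)/64) := by
    apply Finset.prod_pos
    intro p hp
    have : p ∈ FS := (Finset.mem_sdiff.mp hp).1
    have hp2 : 0 < (p : ℝ) := by fin_cases this <;> norm_num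
    positivity
  apply le_of_mul_le_mul_right _ hQpos
  have hstep : (∏ p ∈ T, ff p) * ∏ p ∈ FS \ T, (p : ℝ) ^ ((1:ℝ)/64)
      ≤ (∏ p ∈ T, ff p) * ∏ p ∈ FS \ T, ff p := by
    apply mul_le_mul_of_nonneg_left
    · apply Finset.prod_le_prod (fun i _ => by positivity)
      intro i hi
      exact small_prime (Finset.mem_sdiff.mp hi).1
    · apply Finset.prod_nonneg
      intro i hi
      have : i ∈ FS := hT hi
      fin_cases this <;> (unfold ff; push_cast; norm_num)
  calc (∏ p ∈ T, ff p) * ∏ p ∈ FS \ T, (p : ℝ) ^ ((1:ℝ)/64)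
      ≤ (∏ p ∈ T, ff p) * ∏ p ∈ FS \ T, ff p := hstep
    _ = ∏ p ∈ FS, ff p := by rw [mul_comm]; exact Finset.prod_sdiff hT
    _ ≤ 12.033 * ∏ p ∈ FS, (p : ℝ) ^ ((1:ℝ)/64) := prod_FS_ff
    _ = 12.033 * ((∏ p ∈ T, (p : ℝ) ^ ((1:ℝ)/64)) * ∏ p ∈ FS \ T, (p : ℝ) ^ ((1:ℝ)/64)) := by
        rw [mul_comm (∏ p ∈ T, _)]; rw [Finset.prod_sdiff hT]
    _ = 12.033 * (∏ p ∈ T, (p : ℝ) ^ ((1:ℝ)/64)) * ∏ p ∈ FS \ T, (p : ℝ) ^ ((1:ℝ)/64) := by ring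

theorem stmt_10 (N : ℕ) (hN : 1 ≤ N) :
    ∏ p ∈ N.primeFactors, (1 + ((p : ℝ) + 1) / ((p : ℝ) ^ 2 - p - 1))
      ≤ 12.033 * (N : ℝ) ^ ((1 : ℝ) / 64) := by
  have hff : ∏ p ∈ N.primeFactors, (1 + ((p : ℝ) + 1) / ((p : ℝ) ^ 2 - p - 1))
      = ∏ p ∈ N.primeFactors, ff p := rfl
  rw [hff]
  set S := N.primeFactors with hS
  classical
  set T := S.filter (· ∈ FS) with hT
  set U := S.filter (¬ · ∈ FS) with hU
  have hsplit : (∏ p ∈ T, ff p) * ∏ p ∈ U, ff p = ∏ p ∈ S, ff p :=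
    Finset.prod_filter_mul_prod_filter_not S _ _
  have hTsub : T ⊆ FS := fun p hp => (Finset.mem_filter.mp hp).2
  have hbigU : ∀ p ∈ U, 23 ≤ p := by
    intro p hp
    have hmem := Finset.mem_filter.mp hp
    have hprime : p.Prime := Nat.prime_of_mem_primeFactors hmem.1
    have hnot := hmem.2
    by_contra hlt
    push_neg at hlt
    interval_cases p <;> revert hprime hnot <;> decide
  have hUle : ∏ p ∈ U, ff p ≤ ∏ p ∈ U, (p : ℝ) ^ ((1:ℝ)/64) := by
    apply Finset.prod_le_prod
    · intro i hi
      exact ff_nonneg (Nat.prime_of_mem_primeFactors (Finset.mem_filter.mp hi).1)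
    · intro i hi
      exact big_prime (hbigU i hi)
  have hUnonneg : 0 ≤ ∏ p ∈ U, ff p := by
    apply Finset.prod_nonneg
    intro i hi
    exact ff_nonneg (Nat.prime_of_mem_primeFactors (Finset.mem_filter.mp hi).1)
  have hTnonneg : 0 ≤ 12.033 * ∏ p ∈ T, (p : ℝ) ^ ((1:ℝ)/64) := by positivity
  have hcomb : ∏ p ∈ S, ff p ≤ 12.033 * ∏ p ∈ S, (p : ℝ) ^ ((1:ℝ)/64) := by
    rw [← hsplit, ← Finset.prod_filter_mul_prod_filter_not S (· ∈ FS) (fun p => (p : ℝ) ^ ((1:ℝ)/64))]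
    calc (∏ p ∈ T, ff p) * ∏ p ∈ U, ff p
        ≤ (12.033 * ∏ p ∈ T, (p : ℝ) ^ ((1:ℝ)/64)) * ∏ p ∈ U, ff p := by
          apply mul_le_mul_of_nonneg_right (small_part hTsub) hUnonneg
      _ ≤ (12.033 * ∏ p ∈ T, (p : ℝ) ^ ((1:ℝ)/64)) * ∏ p ∈ U, (p : ℝ) ^ ((1:ℝ)/64) := by
          apply mul_le_mul_of_nonneg_left hUle hTnonneg
      _ = 12.033 * ((∏ p ∈ T, (p : ℝ) ^ ((1:ℝ)/64)) * ∏ p ∈ U, (p : ℝ) ^ ((1:ℝ)/64)) := by ring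
  have hprodS : ∏ p ∈ S, (p : ℝ) ^ ((1:ℝ)/64) = ((∏ p ∈ S, p : ℕ) : ℝ) ^ ((1:ℝ)/64) := by
    rw [Real.finset_prod_rpow S _ (fun i _ => by positivity)]
    push_cast
    rfl
  have hdvd : (∏ p ∈ S, p) ∣ N := Nat.prod_primeFactors_dvd N
  have hle : ((∏ p ∈ S, p : ℕ) : ℝ) ≤ (N : ℝ) := by
    exact_mod_cast Nat.le_of_dvd hN hdvd
  have hfinal : ((∏ p ∈ S, p : ℕ) : ℝ) ^ ((1:ℝ)/64) ≤ (N : ℝ) ^ ((1:ℝ)/64) :=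
    Real.rpow_le_rpow (by positivity) hle (by norm_num)
  calc ∏ p ∈ S, ff p ≤ 12.033 * ∏ p ∈ S, (p : ℝ) ^ ((1:ℝ)/64) := hcomb
    _ = 12.033 * ((∏ p ∈ S, p : ℕ) : ℝ) ^ ((1:ℝ)/64) := by rw [hprodS]
    _ ≤ 12.033 * (N : ℝ) ^ ((1:ℝ)/64) := by
        apply mul_le_mul_of_nonneg_left hfinal (by norm_num)
end

section
/- For every positive integer N, 2^{ω(N)} ≤ 10.411 · N^{13/64}, where ω(N) denotes the number of distinct prime divisors of N. -/
lemma rpow_aux {a b : ℝ} (ha : 0 ≤ a) (hb : 0 ≤ b) (h : a^(64:ℕ) ≤ b^(13:ℕ)) :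
    a ≤ b^((13:ℝ)/64) := by
  calc a = (a^(64:ℕ))^((1:ℝ)/64) := by
        rw [← Real.rpow_natCast a 64, ← Real.rpow_mul ha]; norm_num
    _ ≤ (b^(13:ℕ))^((1:ℝ)/64) := Real.rpow_le_rpow (by positivity) h (by norm_num)
    _ = b^((13:ℝ)/64) := by
        rw [← Real.rpow_natCast b 13, ← Real.rpow_mul hb]; norm_num

lemma rpow_aux2 {a b : ℝ} (ha : 0 ≤ a) (hb : 0 ≤ b) (h : b^(13:ℕ) ≤ a^(64:ℕ)) :
    b^((13:ℝ)/64) ≤ a := by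
  calc b^((13:ℝ)/64) = (b^(13:ℕ))^((1:ℝ)/64) := by
        rw [← Real.rpow_natCast b 13, ← Real.rpow_mul hb]; norm_num
    _ ≤ (a^(64:ℕ))^((1:ℝ)/64) := Real.rpow_le_rpow (by positivity) h (by norm_num)
    _ = a := by rw [← Real.rpow_natCast a 64, ← Real.rpow_mul ha]; norm_num

lemma small_fac (p : ℕ) (hp : 0 < p) (h : ((p:ℝ))^(13:ℕ) ≤ (2:ℝ)^(64:ℕ)) :
    1 ≤ 2/(p:ℝ)^((13:ℝ)/64) := by
  have hp' : (0:ℝ) < p := by exact_mod_cast hp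
  rw [le_div_iff₀ (by positivity), one_mul]
  exact rpow_aux2 (by norm_num) (Nat.cast_nonneg p) h

theorem stmt_11 (N : ℕ) (hN : 1 ≤ N) :
    (2 : ℝ) ^ N.primeFactors.card ≤ 10.411 * (N : ℝ) ^ ((13 : ℝ) / 64) := by
  set r : ℝ := (13:ℝ)/64 with hr
  set P := N.primeFactors with hP
  set f : ℕ → ℝ := fun p => 2/(p:ℝ)^r with hf
  have hfnn : ∀ p, 0 ≤ f p := fun p => by positivity
  have hppos : ∀ p ∈ P, 0 < p := fun p hp => (Nat.prime_of_mem_primeFactors hp).pos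
  have h1 : (2:ℝ) ^ P.card = (∏ p ∈ P, f p) * ∏ p ∈ P, (p:ℝ)^r := by
    rw [← Finset.prod_mul_distrib, ← Finset.prod_const]
    refine Finset.prod_congr rfl fun p hp => ?_
    have hp0 : (0:ℝ) < (p:ℝ) := by exact_mod_cast hppos p hp
    have : (0:ℝ) < (p:ℝ)^r := by positivity
    simp only [hf]; rw [div_mul_cancel₀ _ this.ne']
  have h2 : (∏ p ∈ P, (p:ℝ)^r) ≤ (N:ℝ)^r := by
    rw [Real.finset_prod_rpow P _ (fun p _ => Nat.cast_nonneg p)]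
    apply Real.rpow_le_rpow (Finset.prod_nonneg fun p _ => Nat.cast_nonneg p)
    · rw [← Nat.cast_prod]
      exact_mod_cast Nat.le_of_dvd hN (Nat.prod_primeFactors_dvd N)
    · rw [hr]; norm_num
  have h3 : (∏ p ∈ P, f p) ≤ 10.411 := by
    set T : Finset ℕ := {2,3,5,7,11,13,17,19,23,29} with hT
    have hsplit := Finset.prod_filter_mul_prod_filter_not P (· ≤ 29) f
    have hbig : (∏ p ∈ P.filter (fun p => ¬ p ≤ 29), f p) ≤ 1 := by
      apply Finset.prod_le_one (fun p _ => hfnn p)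
      intro p hp
      rw [Finset.mem_filter] at hp
      have hpr := Nat.prime_of_mem_primeFactors hp.1
      have hne : p ≠ 30 := by rintro rfl; norm_num at hpr
      have hp31 : 31 ≤ p := by omega
      have hn : (2:ℕ)^64 ≤ p^13 :=
        le_trans (by norm_num) (Nat.pow_le_pow_left hp31 13)
      have hR : (2:ℝ)^(64:ℕ) ≤ (p:ℝ)^(13:ℕ) := by exact_mod_cast hn
      rw [hf]
      rw [div_le_one (by positivity)]
      rw [hr]
      exact rpow_aux (by norm_num) (Nat.cast_nonneg p) hR
    set S := P.filter (fun p => p ≤ 29) with hS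
    have hST : S ⊆ T := by
      intro p hp
      rw [hS, Finset.mem_filter] at hp
      have hprime := Nat.prime_of_mem_primeFactors hp.1
      have h29 := hp.2
      interval_cases p <;> revert hprime <;> decide
    have hSle : (∏ p ∈ S, f p) ≤ ∏ p ∈ T, f p := by
      rw [← Finset.prod_sdiff hST]
      have h1le : 1 ≤ ∏ p ∈ T \ S, f p := by
        have := Finset.prod_le_prod (s := T \ S) (f := fun _ => (1:ℝ)) (g := f)
          (fun i _ => zero_le_one) (fun p hp => ?_)
        · simpa using this
        · have hpT : p ∈ T := (Finset.mem_sdiff.mp hp).1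
          rw [hf, hr]
          have hp0 : 0 < p := by fin_cases hpT <;> norm_num
          apply small_fac p hp0
          fin_cases hpT <;> norm_num
      exact le_mul_of_one_le_left (Finset.prod_nonneg fun p _ => hfnn p) h1le
    have hTval : (∏ p ∈ T, f p) ≤ 10.411 := by
      have hTprod : (∏ p ∈ T, f p) = 1024 / ((6469693230:ℝ))^r := by
        rw [hf, Finset.prod_div_distrib, Finset.prod_const,
          Real.finset_prod_rpow _ _ (fun p _ => Nat.cast_nonneg p)]
        have hc : (∏ p ∈ T, (p:ℝ)) = 6469693230 := by
          rw [← Nat.cast_prod]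
          norm_num [hT]
        rw [hc]
        norm_num [hT]
      rw [hTprod, div_le_iff₀ (by positivity), hr]
      have h64 : ((1024:ℝ)/10.411)^(64:ℕ) ≤ ((6469693230:ℝ))^(13:ℕ) := by norm_num
      have hkey := rpow_aux (by norm_num) (by norm_num : (0:ℝ) ≤ 6469693230) h64
      nlinarith [hkey, Real.rpow_nonneg (by norm_num : (0:ℝ) ≤ 6469693230) ((13:ℝ)/64)]
    calc (∏ p ∈ P, f p) = (∏ p ∈ S, f p) * ∏ p ∈ P.filter (fun p => ¬ p ≤ 29), f p := hsplit.symm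
      _ ≤ (∏ p ∈ T, f p) * 1 := by
          apply mul_le_mul hSle hbig (Finset.prod_nonneg fun p _ => hfnn p)
            (Finset.prod_nonneg fun p _ => hfnn p)
      _ ≤ 10.411 := by rw [mul_one]; exact hTval
  calc (2:ℝ) ^ P.card = (∏ p ∈ P, f p) * ∏ p ∈ P, (p:ℝ)^r := h1
    _ ≤ 10.411 * (N:ℝ)^r := by
        apply mul_le_mul h3 h2 (Finset.prod_nonneg fun p _ => by positivity) (by norm_num)
end

section
/- Let ψ^new = β * ψ as above (β multiplicative with β(p) = -2, β(p²) = 1, β(p^r) = 0 for r ≥ 3; ψ the Dedekind psi function). Then for all N ≥ 1, 1/ψ^new(N) ≤ 12.033 / N^{63/64}. -/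
open ArithmeticFunction

/-- constants per prime -/
noncomputable def Cc (p : ℕ) : ℝ :=
  if p = 2 then 4 else if p = 3 then 7/4 else if p = 5 then 63/50 else
  if p = 7 then 23/20 else if p = 11 then 107/100 else if p = 13 then 21/20 else
  if p = 17 then 51/50 else if p = 19 then 101/100 else 1

lemma Cc_one_le (p : ℕ) : 1 ≤ Cc p := by
  unfold Cc; split_ifs <;> norm_num

lemma pow63_le (m : ℕ) : (m + 23) ^ 63 ≤ (m + 22) ^ 64 := by
  induction m with
  | zero => norm_num
  | succ n ih =>
      have e1 : n + 1 + 23 = n + 24 := by omega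
      have e2 : n + 1 + 22 = n + 23 := by omega
      rw [e1, e2]
      have h2 : (n+24)*(n+22) ≤ (n+23)^2 := by nlinarith
      have step1 : (n+24)^63 * (n+22)^63 ≤ (n+23)^126 := by
        calc (n+24)^63 * (n+22)^63 = ((n+24)*(n+22))^63 := (mul_pow _ _ _).symm
          _ ≤ ((n+23)^2)^63 := Nat.pow_le_pow_left h2 63
          _ = (n+23)^126 := by rw [← pow_mul]
      have h1 : (n+24)^63 * (n+22)^64 ≤ (n+23)^127 := by
        calc (n+24)^63 * (n+22)^64 = ((n+24)^63 * (n+22)^63) * (n+22) := by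
              rw [pow_succ (n+22) 63, mul_assoc]
          _ ≤ (n+23)^126 * (n+23) := Nat.mul_le_mul step1 (by omega)
          _ = (n+23)^127 := (pow_succ _ _).symm
      have h3 : (n+24)^63 * (n+23)^63 ≤ (n+23)^64 * (n+23)^63 := by
        calc (n+24)^63 * (n+23)^63 ≤ (n+24)^63 * (n+22)^64 :=
              Nat.mul_le_mul (le_refl _) ih
          _ ≤ (n+23)^127 := h1
          _ = (n+23)^64 * (n+23)^63 := by rw [← pow_add]
      exact Nat.le_of_mul_le_mul_right h3 (pow_pos (by omega) 63)

lemma large_prime_pow63 {p : ℕ} (hp : 23 ≤ p) : ((p:ℤ)) ^ 63 ≤ ((p:ℤ) - 1) ^ 64 := by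
  obtain ⟨m, rfl⟩ : ∃ m, p = m + 23 := ⟨p - 23, by omega⟩
  have h := pow63_le m
  have : ((m:ℤ) + 23) ^ 63 ≤ ((m:ℤ) + 22) ^ 64 := by exact_mod_cast h
  have e : ((m + 23 : ℕ) : ℤ) - 1 = (m:ℤ) + 22 := by push_cast; ring
  rw [e]
  exact_mod_cast this

lemma large_f2 {p : ℕ} (hp : 23 ≤ p) : ((p:ℤ)) ^ 126 ≤ ((p:ℤ)^2 - (p:ℤ) - 1) ^ 64 := by
  have hp' : (23:ℤ) ≤ (p:ℤ) := by exact_mod_cast hp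
  have f1 := large_prime_pow63 hp
  have h3 : ((p:ℤ)-1)^2 ≤ (p:ℤ)^2 - (p:ℤ) - 1 := by nlinarith
  calc ((p:ℤ))^126 = ((p:ℤ)^63)^2 := by rw [← pow_mul]
    _ ≤ (((p:ℤ)-1)^64)^2 := pow_le_pow_left₀ (by positivity) f1 2
    _ = (((p:ℤ)-1)^2)^64 := by rw [← pow_mul, ← pow_mul, Nat.mul_comm]
    _ ≤ ((p:ℤ)^2 - (p:ℤ) - 1)^64 := pow_le_pow_left₀ (sq_nonneg _) h3 64

lemma large_f3 {p : ℕ} (hp : 23 ≤ p) : ((p:ℤ)) ^ 189 ≤ (((p:ℤ)-1)^2 * ((p:ℤ)+1)) ^ 64 := by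
  have hp' : (23:ℤ) ≤ (p:ℤ) := by exact_mod_cast hp
  have f1 := large_prime_pow63 hp
  have hp1 : (0:ℤ) ≤ (p:ℤ) - 1 := by linarith
  have h1 : ((p:ℤ))^126 ≤ (((p:ℤ)-1)^2)^64 := by
    calc ((p:ℤ))^126 = ((p:ℤ)^63)^2 := by rw [← pow_mul]
      _ ≤ (((p:ℤ)-1)^64)^2 := pow_le_pow_left₀ (by positivity) f1 2
      _ = (((p:ℤ)-1)^2)^64 := by rw [← pow_mul, ← pow_mul, Nat.mul_comm]
  have h2 : ((p:ℤ))^64 ≤ ((p:ℤ)+1)^64 := pow_le_pow_left₀ (by positivity) (by linarith) 64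
  calc ((p:ℤ))^189 ≤ ((p:ℤ))^190 := pow_le_pow_right₀ (by linarith) (by norm_num)
    _ = ((p:ℤ))^126 * ((p:ℤ))^64 := by rw [← pow_add]
    _ ≤ (((p:ℤ)-1)^2)^64 * ((p:ℤ)+1)^64 :=
        mul_le_mul h1 h2 (by positivity) (pow_nonneg (pow_nonneg hp1 2) 64)
    _ = (((p:ℤ)-1)^2 * ((p:ℤ)+1))^64 := (mul_pow _ _ _).symm

section Chi
variable (β ψ : ArithmeticFunction ℤ)
    (hβ : β.IsMultiplicative)
    (hβ1 : ∀ p : ℕ, p.Prime → β p = -2)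
    (hβ2 : ∀ p : ℕ, p.Prime → β (p ^ 2) = 1)
    (hβ3 : ∀ p r : ℕ, p.Prime → 3 ≤ r → β (p ^ r) = 0)
    (hψ : ψ.IsMultiplicative)
    (hψp : ∀ p r : ℕ, p.Prime → 1 ≤ r → ψ (p ^ r) = (p : ℤ) ^ r + (p : ℤ) ^ (r - 1))

lemma chi_sum (p k : ℕ) (hp : p.Prime) :
    (β * ψ) (p ^ k) = ∑ i ∈ Finset.range (k+1), β (p ^ i) * ψ (p ^ (k - i)) := by
  rw [mul_apply, Nat.sum_divisorsAntidiagonal (f := fun x y => β x * ψ y),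
    Nat.sum_divisors_prime_pow hp]
  refine Finset.sum_congr rfl fun i hi => ?_
  rw [Nat.pow_div (Nat.lt_succ_iff.mp (Finset.mem_range.mp hi)) hp.pos]

include hβ hβ1 hψ hψp in
lemma chi_k1 (p : ℕ) (hp : p.Prime) : (β * ψ) (p ^ 1) = (p:ℤ) - 1 := by
  rw [chi_sum β ψ p 1 hp, Finset.sum_range_succ, Finset.sum_range_one]
  simp only [pow_zero, pow_one, Nat.sub_zero, Nat.sub_self]
  rw [hβ.map_one, hψ.map_one, hβ1 p hp]
  have := hψp p 1 hp le_rfl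
  rw [pow_one] at this
  rw [this]
  simp; ring

include hβ hβ1 hβ2 hψ hψp in
lemma chi_k2 (p : ℕ) (hp : p.Prime) : (β * ψ) (p ^ 2) = (p:ℤ)^2 - (p:ℤ) - 1 := by
  rw [chi_sum β ψ p 2 hp, Finset.sum_range_succ, Finset.sum_range_succ,
    Finset.sum_range_one]
  simp only [pow_zero, pow_one, Nat.sub_zero, Nat.sub_self]
  rw [hβ.map_one, hψ.map_one, hβ1 p hp, hβ2 p hp]
  have h1 := hψp p 1 hp le_rfl
  have h2 := hψp p 2 hp (by norm_num)
  rw [pow_one] at h1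
  rw [show (2:ℕ) - 1 = 1 from rfl] at h2
  rw [show (2:ℕ) - 1 = 1 from rfl, pow_one, h1, h2]
  ring

include hβ hβ1 hβ2 hβ3 hψ hψp in
lemma chi_k3 (p j : ℕ) (hp : p.Prime) :
    (β * ψ) (p ^ (j+3)) = (p:ℤ)^j * (((p:ℤ)-1)^2 * ((p:ℤ)+1)) := by
  rw [chi_sum β ψ p (j+3) hp]
  have hz : ∀ i ∈ Finset.range (j+3+1), i ∉ Finset.range 3 →
      β (p ^ i) * ψ (p ^ (j+3-i)) = 0 := by
    intro i _ hi2
    rw [hβ3 p i hp (by simpa [Finset.mem_range] using hi2), zero_mul]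
  rw [← Finset.sum_subset (Finset.range_subset_range.mpr (by omega)) hz]
  rw [Finset.sum_range_succ, Finset.sum_range_succ, Finset.sum_range_one]
  have e0 : j+3-0 = j+3 := rfl
  have e1 : j+3-1 = j+2 := rfl
  have e2 : j+3-2 = j+1 := rfl
  rw [e0, e1, e2, pow_zero, pow_one, hβ.map_one, hβ1 p hp, hβ2 p hp]
  have h3' := hψp p (j+3) hp (by omega)
  have h2' := hψp p (j+2) hp (by omega)
  have h1' := hψp p (j+1) hp (by omega)
  rw [show j+3-1 = j+2 from rfl] at h3'
  rw [show j+2-1 = j+1 from rfl] at h2'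
  rw [show j+1-1 = j from rfl] at h1'
  rw [h3', h2', h1']
  ring

include hβ hβ1 hβ2 hβ3 hψ hψp in
lemma chi_pos (p k : ℕ) (hp : p.Prime) (hk : 1 ≤ k) : 0 < (β * ψ) (p ^ k) := by
  have hp2 : (2:ℤ) ≤ (p:ℤ) := by exact_mod_cast hp.two_le
  rcases k with _ | _ | _ | j
  · omega
  · rw [chi_k1 β ψ hβ hβ1 hψ hψp p hp]; linarith
  · rw [chi_k2 β ψ hβ hβ1 hβ2 hψ hψp p hp]; nlinarith
  · rw [show j+1+1+1 = j+3 from rfl, chi_k3 β ψ hβ hβ1 hβ2 hβ3 hψ hψp p j hp]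
    exact mul_pos (pow_pos (by linarith) j)
      (mul_pos (pow_pos (by linarith) 2) (by linarith))

include hβ hβ1 hβ2 hβ3 hψ hψp in
lemma chi_int_bound (p k a b : ℕ) (hp : p.Prime) (hk : 1 ≤ k)
    (f1 : (p:ℤ)^63 * (b:ℤ)^64 ≤ (a:ℤ)^64 * ((p:ℤ)-1)^64)
    (f2 : (p:ℤ)^126 * (b:ℤ)^64 ≤ (a:ℤ)^64 * ((p:ℤ)^2-(p:ℤ)-1)^64)
    (f3 : (p:ℤ)^189 * (b:ℤ)^64 ≤ (a:ℤ)^64 * (((p:ℤ)-1)^2*((p:ℤ)+1))^64) :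
    (p:ℤ)^(63*k) * (b:ℤ)^64 ≤ (a:ℤ)^64 * ((β*ψ) (p^k))^64 := by
  have hp2 : (2:ℤ) ≤ (p:ℤ) := by exact_mod_cast hp.two_le
  rcases k with _ | _ | _ | j
  · omega
  · rw [chi_k1 β ψ hβ hβ1 hψ hψp p hp]
    simpa using f1
  · rw [chi_k2 β ψ hβ hβ1 hβ2 hψ hψp p hp]
    rw [show 63*2 = 126 from rfl]
    exact f2
  · rw [show j+1+1+1 = j+3 from rfl, chi_k3 β ψ hβ hβ1 hβ2 hβ3 hψ hψp p j hp]
    have e : 63*(j+3) = 63*j + 189 := by ring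
    have e2 : ((p:ℤ)^j * (((p:ℤ)-1)^2*((p:ℤ)+1)))^64
        = (p:ℤ)^(64*j) * ((((p:ℤ)-1)^2*((p:ℤ)+1)))^64 := by
      rw [mul_pow, ← pow_mul, Nat.mul_comm]
    have hA : (0:ℤ) ≤ (((p:ℤ)-1)^2*((p:ℤ)+1))^64 :=
      pow_nonneg (mul_nonneg (sq_nonneg _) (by linarith)) 64
    calc (p:ℤ)^(63*(j+3)) * (b:ℤ)^64
        = (p:ℤ)^(63*j) * ((p:ℤ)^189 * (b:ℤ)^64) := by
          rw [e, pow_add, mul_assoc]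
      _ ≤ (p:ℤ)^(63*j) * ((a:ℤ)^64 * (((p:ℤ)-1)^2*((p:ℤ)+1))^64) :=
          mul_le_mul_of_nonneg_left f3 (pow_nonneg (by linarith) _)
      _ ≤ (p:ℤ)^(64*j) * ((a:ℤ)^64 * (((p:ℤ)-1)^2*((p:ℤ)+1))^64) :=
          mul_le_mul_of_nonneg_right
            (pow_le_pow_right₀ (by linarith) (by omega))
            (mul_nonneg (pow_nonneg (by positivity) 64) hA)
      _ = (a:ℤ)^64 * ((p:ℤ)^(64*j) * (((p:ℤ)-1)^2*((p:ℤ)+1))^64) := by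
          rw [mul_left_comm]
      _ = (a:ℤ)^64 * ((p:ℤ)^j * (((p:ℤ)-1)^2*((p:ℤ)+1)))^64 := by rw [e2]

include hβ hβ1 hβ2 hβ3 hψ hψp in
lemma pp_bound (p k : ℕ) (hp : p.Prime) (hk : 1 ≤ k) :
    ((p ^ k : ℕ) : ℝ) ^ ((63:ℝ)/64) ≤ Cc p * (((β * ψ) (p ^ k) : ℤ) : ℝ) := by
  obtain ⟨a, b, ha, hb, hC, f1, f2, f3⟩ :
      ∃ a b : ℕ, 0 < a ∧ 0 < b ∧ Cc p = (a:ℝ)/(b:ℝ) ∧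
        ((p:ℤ)^63 * (b:ℤ)^64 ≤ (a:ℤ)^64 * ((p:ℤ)-1)^64) ∧
        ((p:ℤ)^126 * (b:ℤ)^64 ≤ (a:ℤ)^64 * ((p:ℤ)^2-(p:ℤ)-1)^64) ∧
        ((p:ℤ)^189 * (b:ℤ)^64 ≤ (a:ℤ)^64 * (((p:ℤ)-1)^2*((p:ℤ)+1))^64) := by
    by_cases h2 : p = 2
    · subst h2
      exact ⟨4, 1, by norm_num, by norm_num, by norm_num [Cc], by norm_num,
        by norm_num, by norm_num⟩
    by_cases h3 : p = 3
    · subst h3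
      exact ⟨7, 4, by norm_num, by norm_num, by norm_num [Cc], by norm_num,
        by norm_num, by norm_num⟩
    by_cases h5 : p = 5
    · subst h5
      exact ⟨63, 50, by norm_num, by norm_num, by norm_num [Cc], by norm_num,
        by norm_num, by norm_num⟩
    by_cases h7 : p = 7
    · subst h7
      exact ⟨23, 20, by norm_num, by norm_num, by norm_num [Cc], by norm_num,
        by norm_num, by norm_num⟩
    by_cases h11 : p = 11
    · subst h11
      exact ⟨107, 100, by norm_num, by norm_num, by norm_num [Cc], by norm_num,
        by norm_num, by norm_num⟩
    by_cases h13 : p = 13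
    · subst h13
      exact ⟨21, 20, by norm_num, by norm_num, by norm_num [Cc], by norm_num,
        by norm_num, by norm_num⟩
    by_cases h17 : p = 17
    · subst h17
      exact ⟨51, 50, by norm_num, by norm_num, by norm_num [Cc], by norm_num,
        by norm_num, by norm_num⟩
    by_cases h19 : p = 19
    · subst h19
      exact ⟨101, 100, by norm_num, by norm_num, by norm_num [Cc], by norm_num,
        by norm_num, by norm_num⟩
    · have hp23 : 23 ≤ p := by
        by_contra hlt
        push_neg at hlt
        have h2le := hp.two_le
        interval_cases p <;> first
          | omega
          | exact absurd hp (by norm_num)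
      refine ⟨1, 1, one_pos, one_pos, ?_, ?_, ?_, ?_⟩
      · simp only [Cc, if_neg h2, if_neg h3, if_neg h5, if_neg h7, if_neg h11,
          if_neg h13, if_neg h17, if_neg h19]
        norm_num
      · simpa using large_prime_pow63 hp23
      · simpa using large_f2 hp23
      · simpa using large_f3 hp23
  have hint := chi_int_bound β ψ hβ hβ1 hβ2 hβ3 hψ hψp p k a b hp hk f1 f2 f3
  have hχpos := chi_pos β ψ hβ hβ1 hβ2 hβ3 hψ hψp p k hp hk
  have hχnn : (0:ℝ) ≤ (((β * ψ) (p ^ k) : ℤ) : ℝ) := by exact_mod_cast hχpos.le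
  have hb' : (0:ℝ) < (b:ℝ) := by exact_mod_cast hb
  rw [hC]
  have key : (((p ^ k : ℕ):ℝ)) ^ (63:ℕ)
      ≤ ((a:ℝ)/(b:ℝ) * (((β * ψ) (p ^ k) : ℤ) : ℝ))^(64:ℕ) := by
    have e : ((a:ℝ)/(b:ℝ) * (((β * ψ) (p ^ k) : ℤ) : ℝ))^(64:ℕ)
        = ((a:ℝ)^64 * (((β * ψ) (p ^ k) : ℤ) : ℝ)^64) / (b:ℝ)^64 := by
      rw [mul_pow, div_pow, div_mul_eq_mul_div]
    rw [e, le_div_iff₀ (by positivity)]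
    have hcast : (((p:ℕ):ℝ))^(63*k) * (b:ℝ)^64
        ≤ (a:ℝ)^64 * (((β * ψ) (p ^ k) : ℤ) : ℝ)^64 := by exact_mod_cast hint
    calc ((p^k:ℕ):ℝ)^(63:ℕ) * (b:ℝ)^64 = ((p:ℕ):ℝ)^(63*k) * (b:ℝ)^64 := by
          push_cast
          rw [← pow_mul, Nat.mul_comm]
      _ ≤ _ := hcast
  have hLHS : ((((p^k:ℕ):ℝ)) ^ ((63:ℝ)/64)) ^ (64:ℕ) = (((p^k:ℕ):ℝ))^(63:ℕ) := by
    rw [← Real.rpow_natCast ((((p^k:ℕ):ℝ)) ^ ((63:ℝ)/64)) 64,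
      ← Real.rpow_mul (by positivity)]
    rw [show ((63:ℝ)/64) * ((64:ℕ):ℝ) = ((63:ℕ):ℝ) by norm_num, Real.rpow_natCast]
  exact le_of_pow_le_pow_left₀ (n := 64) (by norm_num)
    (mul_nonneg (by positivity) hχnn) (by rw [hLHS]; exact key)

end Chi

lemma Cc_prod_le (s : Finset ℕ) : ∏ p ∈ s, Cc p ≤ 12.033 := by
  classical
  set T : Finset ℕ := {2,3,5,7,11,13,17,19} with hT
  have hoff : ∀ x : ℕ, x ∉ T → Cc x = 1 := by
    intro x hx
    simp only [hT, Finset.mem_insert, Finset.mem_singleton] at hx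
    push_neg at hx
    obtain ⟨e2, e3, e5, e7, e11, e13, e17, e19⟩ := hx
    simp only [Cc, if_neg e2, if_neg e3, if_neg e5, if_neg e7, if_neg e11,
      if_neg e13, if_neg e17, if_neg e19]
  have h1 : ∏ p ∈ s, Cc p = ∏ p ∈ s ∩ T, Cc p := by
    refine (Finset.prod_subset Finset.inter_subset_left ?_).symm
    intro x _ hx
    exact hoff x (fun hxT => hx (Finset.mem_inter.mpr ⟨by assumption, hxT⟩))
  have h2 : ∏ p ∈ s ∩ T, Cc p = ∏ p ∈ T, (if p ∈ s ∩ T then Cc p else 1) := by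
    rw [← Finset.prod_subset Finset.inter_subset_right
      (fun x _ hx => if_neg hx)]
    exact Finset.prod_congr rfl (fun x hx => (if_pos hx).symm)
  have h3 : ∏ p ∈ T, (if p ∈ s ∩ T then Cc p else 1) ≤ ∏ p ∈ T, Cc p := by
    refine Finset.prod_le_prod ?_ ?_
    · intro i _
      split_ifs
      · linarith [Cc_one_le i]
      · norm_num
    · intro i _
      split_ifs
      · exact le_refl _
      · exact Cc_one_le i
  have h4 : ∏ p ∈ T, Cc p ≤ 12.033 := by
    rw [hT]
    norm_num [Finset.prod_insert, Cc]
  calc ∏ p ∈ s, Cc p = ∏ p ∈ s ∩ T, Cc p := h1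
    _ = ∏ p ∈ T, (if p ∈ s ∩ T then Cc p else 1) := h2
    _ ≤ ∏ p ∈ T, Cc p := h3
    _ ≤ 12.033 := h4

theorem stmt_13 (β ψ : ArithmeticFunction ℤ)
    (hβ : β.IsMultiplicative)
    (hβ1 : ∀ p : ℕ, p.Prime → β p = -2)
    (hβ2 : ∀ p : ℕ, p.Prime → β (p ^ 2) = 1)
    (hβ3 : ∀ p r : ℕ, p.Prime → 3 ≤ r → β (p ^ r) = 0)
    (hψ : ψ.IsMultiplicative)
    (hψp : ∀ p r : ℕ, p.Prime → 1 ≤ r → ψ (p ^ r) = (p : ℤ) ^ r + (p : ℤ) ^ (r - 1)) :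
    ∀ N : ℕ, 1 ≤ N →
      1 / (((β * ψ) N : ℤ) : ℝ) ≤ 12.033 / (N : ℝ) ^ ((63 : ℝ) / 64) := by
  intro N hN
  have hN0 : N ≠ 0 := by omega
  have hχm : (β * ψ).IsMultiplicative := hβ.mul hψ
  set S := N.primeFactors with hS
  have hSsupp : N.factorization.support = S := Nat.support_factorization N
  have hprime : ∀ p ∈ S, p.Prime := fun p hp => Nat.prime_of_mem_primeFactors hp
  have hkpos : ∀ p ∈ S, 1 ≤ N.factorization p := by
    intro p hp
    have : N.factorization p ≠ 0 := by
      rw [← hSsupp] at hp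
      exact Finsupp.mem_support_iff.mp hp
    omega
  have hfact : (β * ψ) N = ∏ p ∈ S, (β * ψ) (p ^ N.factorization p) := by
    rw [ArithmeticFunction.IsMultiplicative.multiplicative_factorization _ hχm hN0,
      Finsupp.prod, hSsupp]
  have hNfact : (N:ℝ) = ∏ p ∈ S, ((p ^ N.factorization p : ℕ) : ℝ) := by
    conv_lhs => rw [← Nat.factorization_prod_pow_eq_self hN0]
    rw [Finsupp.prod, hSsupp]
    push_cast
    rfl
  have hχpos : 0 < (β * ψ) N := by
    rw [hfact]
    exact Finset.prod_pos (fun p hp =>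
      chi_pos β ψ hβ hβ1 hβ2 hβ3 hψ hψp p _ (hprime p hp) (hkpos p hp))
  have hχR : (0:ℝ) < (((β * ψ) N : ℤ) : ℝ) := by exact_mod_cast hχpos
  have hNR : (0:ℝ) < (N:ℝ) := by exact_mod_cast Nat.pos_of_ne_zero hN0
  have hrpos : (0:ℝ) < (N:ℝ) ^ ((63:ℝ)/64) := Real.rpow_pos_of_pos hNR _
  rw [div_le_div_iff₀ hχR hrpos, one_mul]
  have step1 : (N:ℝ) ^ ((63:ℝ)/64)
      = ∏ p ∈ S, ((p ^ N.factorization p : ℕ) : ℝ) ^ ((63:ℝ)/64) := by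
    rw [hNfact, ← Real.finset_prod_rpow S _ (fun p _ => by positivity) _]
  have step2 : ∏ p ∈ S, ((p ^ N.factorization p : ℕ) : ℝ) ^ ((63:ℝ)/64)
      ≤ ∏ p ∈ S, (Cc p * (((β * ψ) (p ^ N.factorization p) : ℤ) : ℝ)) := by
    refine Finset.prod_le_prod (fun p _ => by positivity) ?_
    intro p hp
    exact pp_bound β ψ hβ hβ1 hβ2 hβ3 hψ hψp p _ (hprime p hp) (hkpos p hp)
  have step3 : ∏ p ∈ S, (Cc p * (((β * ψ) (p ^ N.factorization p) : ℤ) : ℝ))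
      = (∏ p ∈ S, Cc p) * (((β * ψ) N : ℤ) : ℝ) := by
    rw [Finset.prod_mul_distrib, hfact]
    push_cast
    rfl
  have step4 : (∏ p ∈ S, Cc p) * (((β * ψ) N : ℤ) : ℝ)
      ≤ 12.033 * (((β * ψ) N : ℤ) : ℝ) :=
    mul_le_mul_of_nonneg_right (Cc_prod_le S) hχR.le
  calc (N:ℝ) ^ ((63:ℝ)/64)
      = ∏ p ∈ S, ((p ^ N.factorization p : ℕ) : ℝ) ^ ((63:ℝ)/64) := step1
    _ ≤ ∏ p ∈ S, (Cc p * (((β * ψ) (p ^ N.factorization p) : ℤ) : ℝ)) := step2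
    _ = (∏ p ∈ S, Cc p) * (((β * ψ) N : ℤ) : ℝ) := step3
    _ ≤ 12.033 * (((β * ψ) N : ℤ) : ℝ) := step4
end

section
/- Fix m ≥ 1 and d | m with h := |d - m/d| ≠ 0, and let Σ_{m,d}(N) = ∑_{τ | N, gcd(τ, N/τ) | h} φ(gcd(τ, N/τ)). Define Σ^new_{m,d} = β * Σ_{m,d}. Then for every N ≥ 1, |Σ^new_{m,d}(N)| ≤ h · 4^{ω(h)}, where ω(h) is the number of distinct primes dividing h. -/
open ArithmeticFunction Finset

private def Fh (h g : ℕ) : ℤ := if g ∣ h then (g.totient : ℤ) else 0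

private lemma Fh_mul (h : ℕ) {x y : ℕ} (cop : Nat.Coprime x y) :
    Fh h (x * y) = Fh h x * Fh h y := by
  unfold Fh
  by_cases hx : x ∣ h <;> by_cases hy : y ∣ h
  · rw [if_pos hx, if_pos hy, if_pos (cop.mul_dvd_of_dvd_of_dvd hx hy),
      Nat.totient_mul cop]
    push_cast; ring
  · rw [if_pos hx, if_neg hy, if_neg (fun hxy => hy ((dvd_mul_left y x).trans hxy)), mul_zero]
  · rw [if_neg hx, if_neg (fun hxy => hx ((dvd_mul_right x y).trans hxy)), zero_mul]
  · rw [if_neg hx, if_neg (fun hxy => hx ((dvd_mul_right x y).trans hxy)), zero_mul]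

private def Tf (h : ℕ) : ArithmeticFunction ℤ :=
  ⟨fun N => ∑ τ ∈ N.divisors, Fh h (Nat.gcd τ (N / τ)), by simp⟩

private lemma Tf_apply (h N : ℕ) :
    Tf h N = ∑ τ ∈ N.divisors, Fh h (Nat.gcd τ (N / τ)) := rfl

private lemma Tf_mult (h : ℕ) : (Tf h).IsMultiplicative := by
  constructor
  · rw [Tf_apply, Nat.divisors_one]
    simp [Fh]
  · intro m n cop
    rcases eq_or_ne m 0 with rfl | hm0
    · have hn1 : n = 1 := by simpa using cop
      subst hn1
      simp [Tf_apply]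
    rcases eq_or_ne n 0 with rfl | hn0
    · have hm1 : m = 1 := by simpa using cop
      subst hm1
      simp [Tf_apply]
    rw [Tf_apply, Tf_apply, Tf_apply, Finset.sum_mul_sum, ← Finset.sum_product']
    symm
    apply Finset.sum_nbij' (i := fun P : ℕ × ℕ => P.1 * P.2)
      (j := fun τ => (Nat.gcd τ m, Nat.gcd τ n))
    · rintro ⟨a, b⟩ hab
      rw [Finset.mem_product, Nat.mem_divisors, Nat.mem_divisors] at hab
      exact Nat.mem_divisors.mpr ⟨mul_dvd_mul hab.1.1 hab.2.1, mul_ne_zero hm0 hn0⟩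
    · intro τ hτ
      rw [Nat.mem_divisors] at hτ
      rw [Finset.mem_product]
      exact ⟨Nat.mem_divisors.mpr ⟨Nat.gcd_dvd_right _ _, hm0⟩,
        Nat.mem_divisors.mpr ⟨Nat.gcd_dvd_right _ _, hn0⟩⟩
    · rintro ⟨a, b⟩ hab
      rw [Finset.mem_product, Nat.mem_divisors, Nat.mem_divisors] at hab
      have hbm : Nat.Coprime b m := (cop.symm.coprime_dvd_left hab.2.1).symm.symm
      have hbm' : Nat.Coprime b m := Nat.Coprime.coprime_dvd_left hab.2.1 cop.symm
      have han : Nat.Coprime a n := Nat.Coprime.coprime_dvd_left hab.1.1 cop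
      ext
      · show Nat.gcd (a * b) m = a
        rw [Nat.Coprime.gcd_mul_right_cancel a hbm', Nat.gcd_eq_left hab.1.1]
      · show Nat.gcd (a * b) n = b
        rw [Nat.Coprime.gcd_mul_left_cancel b han, Nat.gcd_eq_left hab.2.1]
    · intro τ hτ
      rw [Nat.mem_divisors] at hτ
      exact (Nat.gcd_mul_gcd_eq_iff_dvd_mul_of_coprime cop).mpr hτ.1
    · rintro ⟨a, b⟩ hab
      rw [Finset.mem_product, Nat.mem_divisors, Nat.mem_divisors] at hab
      obtain ⟨⟨ha, _⟩, ⟨hb, _⟩⟩ := hab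
      show Fh h (Nat.gcd a (m / a)) * Fh h (Nat.gcd b (n / b))
          = Fh h (Nat.gcd (a * b) (m * n / (a * b)))
      have hxm : m / a ∣ m := Nat.div_dvd_of_dvd ha
      have hyn : n / b ∣ n := Nat.div_dvd_of_dvd hb
      have hmn : m * n / (a * b) = m / a * (n / b) := (Nat.div_mul_div_comm ha hb).symm
      have hxy : Nat.Coprime (m / a) (n / b) :=
        (cop.coprime_dvd_left hxm).coprime_dvd_right hyn
      have hbx : Nat.Coprime b (m / a) :=
        (cop.symm.coprime_dvd_left hb).coprime_dvd_right hxm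
      have hay : Nat.Coprime a (n / b) :=
        (cop.coprime_dvd_left ha).coprime_dvd_right hyn
      set g := Nat.gcd (a * b) (m / a * (n / b)) with hg
      have h1 : Nat.gcd g (m / a) * Nat.gcd g (n / b) = g :=
        (Nat.gcd_mul_gcd_eq_iff_dvd_mul_of_coprime hxy).mpr (Nat.gcd_dvd_right _ _)
      have h2 : Nat.gcd g (m / a) = Nat.gcd a (m / a) := by
        rw [hg, Nat.gcd_assoc, Nat.gcd_eq_right (dvd_mul_right (m/a) (n/b)),
          Nat.Coprime.gcd_mul_right_cancel a hbx]
      have h3 : Nat.gcd g (n / b) = Nat.gcd b (n / b) := by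
        rw [hg, Nat.gcd_assoc, Nat.gcd_eq_right (dvd_mul_left (n/b) (m/a)),
          Nat.Coprime.gcd_mul_left_cancel b hay]
      have key : Nat.gcd (a * b) (m * n / (a * b))
          = Nat.gcd a (m / a) * Nat.gcd b (n / b) := by
        rw [hmn, ← hg, ← h1, h2, h3]
      rw [key, Fh_mul]
      exact Nat.Coprime.coprime_dvd_right ((Nat.gcd_dvd_left _ _).trans hb)
        (Nat.Coprime.coprime_dvd_left ((Nat.gcd_dvd_left _ _).trans ha) cop)

private lemma aux_sum_min (f : ℕ → ℤ) (s : ℕ) :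
    ∑ i ∈ Finset.range (s+1), f (min i (s-i)) =
    (∑ k ∈ Finset.range (s/2+1), f k) + ∑ k ∈ Finset.range ((s+1)/2), f k := by
  rw [Finset.range_eq_Ico, ← Finset.sum_Ico_consecutive (f := fun i => f (min i (s - i)))
    (Nat.zero_le (s/2+1)) (by omega : s/2+1 ≤ s+1)]
  congr 1
  · rw [← Finset.range_eq_Ico]
    refine Finset.sum_congr rfl fun i hi => ?_
    rw [Finset.mem_range] at hi
    congr 1
    omega
  · have h1 : ∀ i ∈ Finset.Ico (s/2+1) (s+1), f (min i (s-i)) = f (s - i) := by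
      intro i hi
      rw [Finset.mem_Ico] at hi
      congr 1
      omega
    rw [Finset.sum_congr rfl h1, Finset.sum_Ico_reflect f _ (by omega : s+1 ≤ s+1)]
    have e1 : s + 1 - (s + 1) = 0 := by omega
    have e2 : s + 1 - (s/2 + 1) = (s+1)/2 := by omega
    rw [e1, e2, ← Finset.range_eq_Ico]

private lemma Tf_pp (h p : ℕ) (pp : p.Prime) (s : ℕ) :
    Tf h (p ^ s) = ∑ i ∈ Finset.range (s+1), Fh h (p ^ min i (s - i)) := by
  rw [Tf_apply, Nat.sum_divisors_prime_pow pp]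
  refine Finset.sum_congr rfl fun i hi => ?_
  rw [Finset.mem_range] at hi
  have hdiv : p ^ s / p ^ i = p ^ (s - i) := Nat.pow_div (by omega) pp.pos
  rw [hdiv]
  congr 1
  rcases le_total i (s - i) with H | H
  · rw [Nat.gcd_eq_left (pow_dvd_pow p H), min_eq_left H]
  · rw [Nat.gcd_eq_right (pow_dvd_pow p H), min_eq_right H]

private lemma Tf_diff (h p : ℕ) (pp : p.Prime) (s : ℕ) :
    Tf h (p ^ (s+1)) - Tf h (p ^ s) = Fh h (p ^ ((s+1)/2)) := by
  rw [Tf_pp h p pp, Tf_pp h p pp, aux_sum_min (fun k => Fh h (p ^ k)) (s+1), aux_sum_min (fun k => Fh h (p ^ k)) s]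
  have e : (s + 1 + 1) / 2 = s / 2 + 1 := by omega
  rw [e, Finset.sum_range_succ (fun k => Fh h (p ^ k)) ((s+1)/2)]
  ring

private lemma conv_pp (h p : ℕ) (pp : p.Prime) (β : ArithmeticFunction ℤ) (r : ℕ) :
    (β * Tf h) (p ^ r) = ∑ j ∈ Finset.range (r+1), β (p ^ j) * Tf h (p ^ (r - j)) := by
  rw [ArithmeticFunction.mul_apply,
    Nat.sum_divisorsAntidiagonal (f := fun a b => β a * Tf h b),
    Nat.sum_divisors_prime_pow pp]
  refine Finset.sum_congr rfl fun j hj => ?_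
  rw [Finset.mem_range] at hj
  rw [Nat.pow_div (by omega) pp.pos]

private lemma Fh_nonneg (h g : ℕ) : 0 ≤ Fh h g := by
  unfold Fh; split <;> positivity

private lemma Fh_le (h p : ℕ) (pp : p.Prime) (hne : h ≠ 0) (k : ℕ) :
    Fh h (p ^ k) ≤ if p ∣ h then ((p : ℤ) ^ (h.factorization p)) else 1 := by
  unfold Fh
  by_cases hd : p ^ k ∣ h
  · rw [if_pos hd]
    by_cases hp : p ∣ h
    · rw [if_pos hp]
      have hk : k ≤ h.factorization p := (Nat.Prime.pow_dvd_iff_le_factorization pp hne).mp hd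
      calc ((p ^ k).totient : ℤ) ≤ ((p ^ k : ℕ) : ℤ) := by exact_mod_cast Nat.totient_le _
        _ ≤ (p : ℤ) ^ (h.factorization p) := by
            push_cast
            exact pow_le_pow_right₀ (by exact_mod_cast pp.one_le) hk
    · rw [if_neg hp]
      have hk0 : k = 0 := by
        by_contra hk0
        exact hp ((dvd_pow_self p hk0).trans hd)
      subst hk0
      simp
  · rw [if_neg hd]
    split
    · positivity
    · norm_num

private lemma local_bound (h p : ℕ) (pp : p.Prime) (hne : h ≠ 0)
    (β : ArithmeticFunction ℤ) (hβ : β.IsMultiplicative)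
    (hβ1 : ∀ p : ℕ, p.Prime → β p = -2)
    (hβ2 : ∀ p : ℕ, p.Prime → β (p ^ 2) = 1)
    (hβ3 : ∀ p r : ℕ, p.Prime → 3 ≤ r → β (p ^ r) = 0)
    (r : ℕ) (hr : 1 ≤ r) :
    |(β * Tf h) (p ^ r)| ≤ if p ∣ h then ((p : ℤ) ^ (h.factorization p)) else 1 := by
  have hB1 : (1 : ℤ) ≤ if p ∣ h then ((p : ℤ) ^ (h.factorization p)) else 1 := by
    split
    · exact one_le_pow₀ (by exact_mod_cast pp.one_le)
    · exact le_refl 1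
  have t0 : Tf h (p ^ 0) = 1 := by
    rw [Tf_pp h p pp]
    simp [Fh]
  have t1 : Tf h (p ^ 1) = 2 := by
    rw [Tf_pp h p pp]
    simp [Finset.sum_range_succ, Fh]
  rcases eq_or_lt_of_le hr with hr1 | hr2
  · -- r = 1
    rw [← hr1, conv_pp h p pp β 1]
    simp only [Finset.sum_range_succ, Finset.sum_range_zero, zero_add]
    norm_num
    have t1' : Tf h p = 2 := by rw [← pow_one p]; exact t1
    have t0' : Tf h 1 = 1 := by rw [← pow_zero p]; exact t0
    rw [hβ.1, hβ1 p pp, t1', t0']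
    norm_num
    linarith [hB1]
  · -- r ≥ 2
    obtain ⟨s, rfl⟩ : ∃ s, r = s + 2 := ⟨r - 2, by omega⟩
    rw [conv_pp h p pp β (s+2)]
    have hsub : Finset.range 3 ⊆ Finset.range (s+2+1) := Finset.range_subset_range.mpr (by omega)
    have h0 : ∀ j ∈ Finset.range (s+2+1), j ∉ Finset.range 3 →
        β (p ^ j) * Tf h (p ^ (s + 2 - j)) = 0 := by
      intro j hj hj3
      rw [Finset.mem_range] at hj hj3
      rw [hβ3 p j pp (by omega), zero_mul]
    rw [← Finset.sum_subset hsub h0]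
    simp only [Finset.sum_range_succ, Finset.sum_range_zero, zero_add]
    have e0 : s + 2 - 0 = s + 2 := by omega
    have e1 : s + 2 - 1 = s + 1 := by omega
    have e2 : s + 2 - 2 = s := by omega
    rw [e0, e1, e2, pow_zero, pow_one, hβ.1, hβ1 p pp, hβ2 p pp]
    have d1 := Tf_diff h p pp (s+1)
    have d2 := Tf_diff h p pp s
    have veq : 1 * Tf h (p ^ (s + 2)) + -2 * Tf h (p ^ (s + 1)) + 1 * Tf h (p ^ s)
        = Fh h (p ^ ((s + 1 + 1) / 2)) - Fh h (p ^ ((s + 1) / 2)) := by linarith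
    rw [veq]
    have f1 := Fh_le h p pp hne ((s + 1 + 1) / 2)
    have f2 := Fh_le h p pp hne ((s + 1) / 2)
    have n1 := Fh_nonneg h (p ^ ((s + 1 + 1) / 2))
    have n2 := Fh_nonneg h (p ^ ((s + 1) / 2))
    rw [abs_le]
    constructor <;> [linarith; linarith]

theorem stmt_17 (m d : ℕ) (hm : 1 ≤ m) (hd : d ∣ m)
    (h : ℕ) (hh : h = ((d : ℤ) - ((m / d : ℕ) : ℤ)).natAbs) (hne : h ≠ 0)
    (β Sg : ArithmeticFunction ℤ)
    (hβ : β.IsMultiplicative)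
    (hβ1 : ∀ p : ℕ, p.Prime → β p = -2)
    (hβ2 : ∀ p : ℕ, p.Prime → β (p ^ 2) = 1)
    (hβ3 : ∀ p r : ℕ, p.Prime → 3 ≤ r → β (p ^ r) = 0)
    (hSg : ∀ N : ℕ, 0 < N → Sg N =
      ∑ τ ∈ N.divisors,
        if Nat.gcd τ (N / τ) ∣ h then ((Nat.gcd τ (N / τ)).totient : ℤ) else 0) :
    ∀ N : ℕ, 1 ≤ N → |(β * Sg) N| ≤ (h : ℤ) * 4 ^ h.primeFactors.card := by
  have hST : Sg = Tf h := by
    ext N0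
    rcases eq_or_ne N0 0 with rfl | h0
    · rw [ArithmeticFunction.map_zero, ArithmeticFunction.map_zero]
    · rw [hSg N0 (Nat.pos_of_ne_zero h0), Tf_apply]
      rfl
  subst hST
  intro N hN
  have hM : (β * Tf h).IsMultiplicative := hβ.mul (Tf_mult h)
  have hN0 : N ≠ 0 := by omega
  rw [hM.multiplicative_factorization (β * Tf h) hN0, Finsupp.prod, Finset.abs_prod]
  have key1 : ∀ q ∈ N.factorization.support, |(β * Tf h) (q ^ N.factorization q)|
      ≤ (((if q ∣ h then q ^ h.factorization q else 1 : ℕ)) : ℤ) := by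
    intro q hq
    have hqp : q.Prime :=
      Nat.prime_of_mem_primeFactors (by rwa [Nat.support_factorization] at hq)
    have hq1 : 1 ≤ N.factorization q := Nat.pos_of_ne_zero (Finsupp.mem_support_iff.mp hq)
    refine (local_bound h q hqp hne β hβ hβ1 hβ2 hβ3 _ hq1).trans_eq ?_
    split <;> push_cast <;> ring
  have natb : (∏ q ∈ N.factorization.support,
      (if q ∣ h then q ^ h.factorization q else 1)) ≤ h := by
    rw [← Finset.prod_filter]
    have hsub2 : (N.factorization.support.filter (· ∣ h)) ⊆ h.primeFactors := by
      intro q hq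
      rw [Finset.mem_filter] at hq
      exact Nat.mem_primeFactors.mpr
        ⟨Nat.prime_of_mem_primeFactors (by rw [← Nat.support_factorization]; exact hq.1),
          hq.2, hne⟩
    calc ∏ q ∈ N.factorization.support.filter (· ∣ h), q ^ h.factorization q
        ≤ ∏ q ∈ h.primeFactors, q ^ h.factorization q :=
          Finset.prod_le_prod_of_subset_of_one_le' hsub2
            (fun i hi _ => Nat.one_le_iff_ne_zero.mpr
              (pow_ne_zero _ (Nat.prime_of_mem_primeFactors hi).ne_zero))
      _ = h := by
          have := Nat.factorization_prod_pow_eq_self hne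
          rw [Finsupp.prod, Nat.support_factorization] at this
          exact this
  calc ∏ q ∈ N.factorization.support, |(β * Tf h) (q ^ N.factorization q)|
      ≤ ∏ q ∈ N.factorization.support,
          (((if q ∣ h then q ^ h.factorization q else 1 : ℕ)) : ℤ) :=
        Finset.prod_le_prod (fun _ _ => abs_nonneg _) key1
    _ = ((∏ q ∈ N.factorization.support,
          (if q ∣ h then q ^ h.factorization q else 1) : ℕ) : ℤ) := by
        rw [Nat.cast_prod]
    _ ≤ (h : ℤ) := by exact_mod_cast natb
    _ ≤ (h : ℤ) * 4 ^ h.primeFactors.card := by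
        have h4 : (1 : ℤ) ≤ 4 ^ h.primeFactors.card := one_le_pow₀ (by norm_num)
        nlinarith [show (0:ℤ) ≤ (h:ℤ) by positivity]
end

section
/- Fix m ≥ 1 a perfect square and d = √m, so h = d - m/d = 0. With Σ_{m,d}(N) = ∑_{τ | N} φ(gcd(τ, N/τ)) (no divisibility constraint since everything divides 0) and Σ^new = β * Σ_{m,d}, we have 0 ≤ Σ^new(N) ≤ √N / π₂(N)² for all N ≥ 1, where π₂(N) = ∏_{p | N}(1 + 1/(p-1)). -/
open ArithmeticFunction Finset

private lemma aux_coprime_dvd {M N x y : ℕ} (h : M.Coprime N) (hx : x ∣ M) (hy : y ∣ N) :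
    x.Coprime y :=
  Nat.Coprime.coprime_dvd_right hy (Nat.Coprime.coprime_dvd_left hx h)

private lemma sg_mult (Sg : ArithmeticFunction ℤ)
    (hSg : ∀ N : ℕ, 0 < N → Sg N =
      ∑ τ ∈ N.divisors, ((Nat.gcd τ (N / τ)).totient : ℤ)) :
    Sg.IsMultiplicative := by
  constructor
  · rw [hSg 1 one_pos]; simp
  · intro M N h
    rcases Nat.eq_zero_or_pos M with rfl | hM
    · simp
    rcases Nat.eq_zero_or_pos N with rfl | hN
    · simp
    rw [hSg M hM, hSg N hN, hSg _ (Nat.mul_pos hM hN), Finset.sum_mul_sum,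
      ← Finset.sum_product']
    have hMN : M * N ≠ 0 := (Nat.mul_pos hM hN).ne'
    refine Finset.sum_nbij' (fun τ => (Nat.gcd τ M, Nat.gcd τ N))
      (fun x => x.1 * x.2) ?_ ?_ ?_ ?_ ?_
    · intro τ hτ
      rw [Nat.mem_divisors] at hτ
      rw [Finset.mem_product]
      exact ⟨Nat.mem_divisors.mpr ⟨Nat.gcd_dvd_right _ _, hM.ne'⟩,
        Nat.mem_divisors.mpr ⟨Nat.gcd_dvd_right _ _, hN.ne'⟩⟩
    · rintro ⟨a, b⟩ hab
      rw [Finset.mem_product, Nat.mem_divisors, Nat.mem_divisors] at hab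
      exact Nat.mem_divisors.mpr ⟨mul_dvd_mul hab.1.1 hab.2.1, hMN⟩
    · intro τ hτ
      rw [Nat.mem_divisors] at hτ
      exact (Nat.gcd_mul_gcd_eq_iff_dvd_mul_of_coprime h).mpr hτ.1
    · rintro ⟨a, b⟩ hab
      rw [Finset.mem_product, Nat.mem_divisors, Nat.mem_divisors] at hab
      obtain ⟨⟨ha, -⟩, hb, -⟩ := hab
      have hbM : b.Coprime M := (aux_coprime_dvd h dvd_rfl hb).symm
      have haN : a.Coprime N := aux_coprime_dvd h ha dvd_rfl
      simp only [Prod.mk.injEq]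
      constructor
      · rw [Nat.Coprime.gcd_mul_right_cancel a hbM, Nat.gcd_eq_left ha]
      · rw [Nat.Coprime.gcd_mul_left_cancel b haN, Nat.gcd_eq_left hb]
    · intro τ hτ
      rw [Nat.mem_divisors] at hτ
      set a := Nat.gcd τ M with ha'
      set b := Nat.gcd τ N with hb'
      have ha : a ∣ M := Nat.gcd_dvd_right _ _
      have hb : b ∣ N := Nat.gcd_dvd_right _ _
      have hab : a * b = τ := (Nat.gcd_mul_gcd_eq_iff_dvd_mul_of_coprime h).mpr hτ.1
      have hdiv : M / a * (N / b) = M * N / (a * b) :=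
        Nat.div_mul_div_comm ha hb
      have hcop1 : (M / a).Coprime (N / b) :=
        aux_coprime_dvd h (Nat.div_dvd_of_dvd ha) (Nat.div_dvd_of_dvd hb)
      have hb_Ma : b.Coprime (M / a) :=
        (aux_coprime_dvd h (Nat.div_dvd_of_dvd ha) hb).symm
      have ha_Nb : a.Coprime (N / b) :=
        aux_coprime_dvd h ha (Nat.div_dvd_of_dvd hb)
      have key : Nat.gcd τ (M * N / τ) = Nat.gcd a (M / a) * Nat.gcd b (N / b) := by
        rw [← hab, ← hdiv, Nat.Coprime.gcd_mul _ hcop1,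
          Nat.Coprime.gcd_mul_right_cancel a hb_Ma,
          Nat.Coprime.gcd_mul_left_cancel b ha_Nb]
      have hcop2 : (Nat.gcd a (M / a)).Coprime (Nat.gcd b (N / b)) :=
        aux_coprime_dvd h ((Nat.gcd_dvd_left _ _).trans ha)
          ((Nat.gcd_dvd_left _ _).trans hb)
      rw [key, Nat.totient_mul hcop2]
      push_cast
      ring

private def Sfun (p : ℕ) (k : ℕ) : ℤ :=
  ∑ i ∈ Finset.range (k + 1), ((p ^ min i (k - i)).totient : ℤ)

private lemma tot_step {p : ℕ} (hp : p.Prime) (j : ℕ) :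
    ((p ^ (j + 1)).totient : ℤ) = p * ((p ^ j).totient : ℤ) - (if j = 0 then 1 else 0) := by
  cases j with
  | zero =>
    simp [Nat.totient_prime hp, Nat.cast_sub hp.one_le]
  | succ n =>
    rw [Nat.totient_prime_pow_succ hp, Nat.totient_prime_pow_succ hp]
    rw [if_neg (Nat.succ_ne_zero n)]
    push_cast [Nat.cast_sub hp.one_le]
    ring

private lemma Sfun_rec {p : ℕ} (hp : p.Prime) (k : ℕ) :
    Sfun p (k + 3) = p * Sfun p (k + 1) := by
  have hsum : Sfun p (k + 3)
      = (∑ i ∈ Finset.range (k + 2), ((p ^ (min i (k + 1 - i) + 1)).totient : ℤ)) + 2 := by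
    rw [Sfun, Finset.sum_range_succ, Finset.sum_range_succ']
    have h1 : min (k + 3) (k + 3 - (k + 3)) = 0 := by omega
    have h2 : min 0 (k + 3 - 0) = 0 := by omega
    rw [h1, h2]
    rw [Finset.sum_congr rfl (fun i hi => by
      rw [show min (i + 1) (k + 3 - (i + 1)) = min i (k + 1 - i) + 1 by
        rw [Finset.mem_range] at hi; omega])]
    simp
    ring
  have hite : (∑ i ∈ Finset.range (k + 2),
      (if min i (k + 1 - i) = 0 then (1 : ℤ) else 0)) = 2 := by
    rw [Finset.sum_range_succ, Finset.sum_range_succ']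
    have h1 : min (k + 1) (k + 1 - (k + 1)) = 0 := by omega
    have h2 : min 0 (k + 1 - 0) = 0 := by omega
    rw [h1, h2]
    have h3 : ∑ i ∈ Finset.range k,
        (if min (i + 1) (k + 1 - (i + 1)) = 0 then (1 : ℤ) else 0) = 0 := by
      apply Finset.sum_eq_zero
      intro i hi
      rw [Finset.mem_range] at hi
      rw [if_neg (by omega)]
    rw [h3]
    norm_num
  rw [hsum, Finset.sum_congr rfl (fun i _ => tot_step hp (min i (k + 1 - i))),
    Finset.sum_sub_distrib, hite, ← Finset.mul_sum, Sfun]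
  ring

private lemma Sfun_zero (p : ℕ) : Sfun p 0 = 1 := by simp [Sfun]

private lemma Sfun_one (p : ℕ) : Sfun p 1 = 2 := by
  simp [Sfun, Finset.sum_range_succ]

private lemma Sfun_two {p : ℕ} (hp : p.Prime) : Sfun p 2 = p + 1 := by
  simp [Sfun, Finset.sum_range_succ, Nat.totient_prime hp, Nat.cast_sub hp.one_le]

private lemma Sfun_even {p : ℕ} (hp : p.Prime) : ∀ t, Sfun p (2 * t + 2) = p ^ t * (p + 1) := by
  intro t
  induction t with
  | zero => simpa using Sfun_two hp
  | succ n ih =>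
    have h : 2 * (n + 1) + 2 = (2 * n + 1) + 3 := by ring
    rw [h, Sfun_rec hp, show (2 * n + 1) + 1 = 2 * n + 2 from rfl, ih]
    ring

private lemma Sfun_odd {p : ℕ} (hp : p.Prime) : ∀ t, Sfun p (2 * t + 1) = 2 * p ^ t := by
  intro t
  induction t with
  | zero => simpa using Sfun_one p
  | succ n ih =>
    have h : 2 * (n + 1) + 1 = (2 * n) + 3 := by ring
    rw [h, Sfun_rec hp, show (2 * n) + 1 = 2 * n + 1 from rfl, ih]
    ring

private lemma Sg_pp (Sg : ArithmeticFunction ℤ)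
    (hSg : ∀ N : ℕ, 0 < N → Sg N =
      ∑ τ ∈ N.divisors, ((Nat.gcd τ (N / τ)).totient : ℤ))
    {p : ℕ} (hp : p.Prime) (k : ℕ) :
    Sg (p ^ k) = Sfun p k := by
  rw [hSg _ (pow_pos hp.pos k), Nat.divisors_prime_pow hp, Finset.sum_map, Sfun]
  apply Finset.sum_congr rfl
  intro i hi
  rw [Finset.mem_range] at hi
  have hik : i ≤ k := by omega
  simp only [Function.Embedding.coeFn_mk]
  rw [Nat.pow_div hik hp.pos]
  congr 2
  rcases le_total i (k - i) with h | h
  · rw [min_eq_left h, Nat.gcd_eq_left (pow_dvd_pow p h)]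
  · rw [min_eq_right h, Nat.gcd_eq_right (pow_dvd_pow p h)]

private lemma F_pp (β Sg : ArithmeticFunction ℤ) {p : ℕ} (hp : p.Prime) (r : ℕ) :
    (β * Sg) (p ^ r) = ∑ i ∈ Finset.range (r + 1), β (p ^ i) * Sg (p ^ (r - i)) := by
  rw [mul_apply, Nat.sum_divisorsAntidiagonal (f := fun x y => β x * Sg y),
    Nat.divisors_prime_pow hp, Finset.sum_map]
  apply Finset.sum_congr rfl
  intro i hi
  rw [Finset.mem_range] at hi
  have hik : i ≤ r := by omega
  simp only [Function.Embedding.coeFn_mk]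
  rw [Nat.pow_div hik hp.pos]

section Fvals

variable (β Sg : ArithmeticFunction ℤ)
  (hβ : β.IsMultiplicative)
  (hβ1 : ∀ p : ℕ, p.Prime → β p = -2)
  (hβ2 : ∀ p : ℕ, p.Prime → β (p ^ 2) = 1)
  (hβ3 : ∀ p r : ℕ, p.Prime → 3 ≤ r → β (p ^ r) = 0)
  (hSg : ∀ N : ℕ, 0 < N → Sg N =
      ∑ τ ∈ N.divisors, ((Nat.gcd τ (N / τ)).totient : ℤ))

include hβ hβ1 hSg in
private lemma F_val1 {p : ℕ} (hp : p.Prime) : (β * Sg) (p ^ 1) = 0 := by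
  rw [F_pp β Sg hp 1, Finset.sum_range_succ, Finset.sum_range_succ, Finset.sum_range_zero]
  rw [pow_zero, pow_one, hβ.map_one, hβ1 p hp]
  have h1 : Sg p = 2 := by
    have := Sg_pp Sg hSg hp 1; rwa [pow_one, Sfun_one] at this
  have h0 : Sg 1 = 1 := by
    have := Sg_pp Sg hSg hp 0; rwa [pow_zero, Sfun_zero] at this
  rw [h1, h0]
  ring

include hβ hβ1 hβ2 hβ3 hSg in
private lemma F_val2 {p : ℕ} (hp : p.Prime) (s : ℕ) :
    (β * Sg) (p ^ (s + 2)) = Sfun p (s + 2) - 2 * Sfun p (s + 1) + Sfun p s := by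
  rw [F_pp β Sg hp (s + 2), Finset.sum_range_succ', Finset.sum_range_succ',
    Finset.sum_range_succ']
  have h0 : ∑ i ∈ Finset.range s, β (p ^ (i + 1 + 1 + 1)) * Sg (p ^ (s + 2 - (i + 1 + 1 + 1)))
      = 0 := by
    apply Finset.sum_eq_zero
    intro i _
    rw [hβ3 p (i + 1 + 1 + 1) hp (by omega), zero_mul]
  rw [h0]
  rw [show (0 : ℕ) + 1 + 1 = 2 from rfl, show (0 : ℕ) + 1 = 1 from rfl]
  rw [show s + 2 - 2 = s from by omega, show s + 2 - 1 = s + 1 from by omega,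
    show s + 2 - 0 = s + 2 from by omega]
  rw [pow_zero, hβ.map_one, hβ2 p hp, pow_one, hβ1 p hp]
  rw [Sg_pp Sg hSg hp s, Sg_pp Sg hSg hp (s + 1), Sg_pp Sg hSg hp (s + 2)]
  ring

include hβ hβ1 hβ2 hβ3 hSg in
private lemma F_bounds {p : ℕ} (hp : p.Prime) (k : ℕ) (hk : 1 ≤ k) :
    0 ≤ (β * Sg) (p ^ k) ∧
    (((β * Sg) (p ^ k) : ℤ) : ℝ) ≤ Real.sqrt ((p : ℝ) ^ k) * (((p : ℝ) - 1) / p) ^ 2 := by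
  have hp2 : 2 ≤ p := hp.two_le
  have hp1 : (1 : ℝ) < (p : ℝ) := by exact_mod_cast hp.one_lt
  have hp0 : (0 : ℝ) < (p : ℝ) := by linarith
  rcases k with _ | _ | _ | n
  · omega
  · -- k = 1
    rw [show (0 + 1 : ℕ) = 1 from rfl, F_val1 β Sg hβ hβ1 hSg hp]
    constructor
    · exact le_refl 0
    · push_cast
      positivity
  · -- k = 2
    rw [show (0 + 1 + 1 : ℕ) = 2 from rfl]
    have hF : (β * Sg) (p ^ 2) = (p : ℤ) - 2 := by
      rw [show (2 : ℕ) = 0 + 2 from rfl, F_val2 β Sg hβ hβ1 hβ2 hβ3 hSg hp 0,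
        Sfun_two hp, Sfun_one, Sfun_zero]
      ring
    rw [hF]
    constructor
    · have : (2 : ℤ) ≤ p := by exact_mod_cast hp2
      omega
    · have hsq : Real.sqrt ((p : ℝ) ^ 2) = (p : ℝ) := Real.sqrt_sq hp0.le
      rw [hsq]
      have heq : (p : ℝ) * (((p : ℝ) - 1) / p) ^ 2 = ((p : ℝ) - 1) ^ 2 / p := by
        field_simp
      rw [heq, le_div_iff₀ hp0]
      push_cast
      nlinarith
  · -- k = n + 3
    rcases Nat.even_or_odd n with ⟨t, ht⟩ | ⟨t, ht⟩
    · -- n = t + t, k = 2t + 3 odd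
      have hk3 : n + 1 + 1 + 1 = (2 * t + 1) + 2 := by omega
      rw [hk3]
      have hF : (β * Sg) (p ^ ((2 * t + 1) + 2)) = 0 := by
        rw [F_val2 β Sg hβ hβ1 hβ2 hβ3 hSg hp (2 * t + 1)]
        rw [show (2 * t + 1) + 2 = 2 * (t + 1) + 1 from by ring, Sfun_odd hp (t + 1),
          show (2 * t + 1) + 1 = 2 * t + 2 from rfl, Sfun_even hp t, Sfun_odd hp t]
        ring
      rw [hF]
      refine ⟨le_refl 0, ?_⟩
      push_cast
      positivity
    · -- n = 2t + 1, k = 2t + 4 even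
      have hk4 : n + 1 + 1 + 1 = (2 * t + 2) + 2 := by omega
      rw [hk4]
      have hF : (β * Sg) (p ^ ((2 * t + 2) + 2)) = p ^ t * ((p : ℤ) - 1) ^ 2 := by
        rw [F_val2 β Sg hβ hβ1 hβ2 hβ3 hSg hp (2 * t + 2)]
        rw [show (2 * t + 2) + 2 = 2 * (t + 1) + 2 from by ring, Sfun_even hp (t + 1),
          show (2 * t + 2) + 1 = 2 * (t + 1) + 1 from by ring, Sfun_odd hp (t + 1),
          Sfun_even hp t]
        ring
      rw [hF]
      constructor
      · have hpz : (0 : ℤ) ≤ (p : ℤ) ^ t := by positivity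
        exact mul_nonneg hpz (sq_nonneg _)
      · have hsq : Real.sqrt ((p : ℝ) ^ ((2 * t + 2) + 2)) = (p : ℝ) ^ (t + 2) := by
          rw [show (p : ℝ) ^ ((2 * t + 2) + 2) = ((p : ℝ) ^ (t + 2)) ^ 2 from by ring]
          exact Real.sqrt_sq (by positivity)
        rw [hsq]
        have heq : (p : ℝ) ^ (t + 2) * (((p : ℝ) - 1) / p) ^ 2
            = (p : ℝ) ^ t * ((p : ℝ) - 1) ^ 2 := by
          field_simp
          ring
        rw [heq]
        exact le_of_eq (by push_cast; ring)

end Fvals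

private lemma sqrt_prod {s : Finset ℕ} (f : ℕ → ℝ) (hf : ∀ i ∈ s, 0 ≤ f i) :
    ∏ i ∈ s, Real.sqrt (f i) = Real.sqrt (∏ i ∈ s, f i) := by
  induction s using Finset.cons_induction with
  | empty => simp
  | cons a s ha ih =>
    rw [Finset.prod_cons, Finset.prod_cons,
      Real.sqrt_mul (hf a (Finset.mem_cons_self a s)), ih]
    intro i hi
    exact hf i (Finset.mem_cons_of_mem hi)

theorem stmt_18 (m d : ℕ) (hm : 1 ≤ m) (hd : d * d = m)
    (β Sg : ArithmeticFunction ℤ)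
    (hβ : β.IsMultiplicative)
    (hβ1 : ∀ p : ℕ, p.Prime → β p = -2)
    (hβ2 : ∀ p : ℕ, p.Prime → β (p ^ 2) = 1)
    (hβ3 : ∀ p r : ℕ, p.Prime → 3 ≤ r → β (p ^ r) = 0)
    (hSg : ∀ N : ℕ, 0 < N → Sg N =
      ∑ τ ∈ N.divisors, ((Nat.gcd τ (N / τ)).totient : ℤ)) :
    ∀ N : ℕ, 1 ≤ N →
      0 ≤ (((β * Sg) N : ℤ) : ℝ) ∧
      (((β * Sg) N : ℤ) : ℝ)
        ≤ Real.sqrt N / (∏ p ∈ N.primeFactors, (1 + 1 / ((p : ℝ) - 1))) ^ 2 := by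
  intro N hN
  have hN0 : N ≠ 0 := by omega
  have hSm : Sg.IsMultiplicative := sg_mult Sg hSg
  have hF : (β * Sg).IsMultiplicative := hβ.mul hSm
  have hfac : (β * Sg) N = ∏ p ∈ N.primeFactors, (β * Sg) (p ^ N.factorization p) := by
    rw [ArithmeticFunction.IsMultiplicative.multiplicative_factorization _ hF hN0]
    rfl
  have hbounds : ∀ p ∈ N.primeFactors,
      0 ≤ (β * Sg) (p ^ N.factorization p) ∧
      (((β * Sg) (p ^ N.factorization p) : ℤ) : ℝ)
        ≤ Real.sqrt ((p : ℝ) ^ N.factorization p) * (((p : ℝ) - 1) / p) ^ 2 := by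
    intro p hp
    have hpp : p.Prime := Nat.prime_of_mem_primeFactors hp
    have hk : 1 ≤ N.factorization p :=
      (Nat.Prime.factorization_pos_of_dvd hpp hN0 (Nat.dvd_of_mem_primeFactors hp))
    exact F_bounds β Sg hβ hβ1 hβ2 hβ3 hSg hpp _ hk
  have hpos : ∀ p ∈ N.primeFactors, (1 : ℝ) < (p : ℝ) := by
    intro p hp
    exact_mod_cast (Nat.prime_of_mem_primeFactors hp).one_lt
  constructor
  · have h1 : (0 : ℤ) ≤ (β * Sg) N := by
      rw [hfac]
      exact Finset.prod_nonneg fun p hp => (hbounds p hp).1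
    exact_mod_cast h1
  · have hNprod : ∏ p ∈ N.primeFactors, (p : ℝ) ^ N.factorization p = (N : ℝ) := by
      have h2 : ∏ p ∈ N.primeFactors, p ^ N.factorization p = N :=
        Nat.factorization_prod_pow_eq_self hN0
      conv_rhs => rw [← h2]
      push_cast
      rfl
    have step1 : (((β * Sg) N : ℤ) : ℝ)
        = ∏ p ∈ N.primeFactors, (((β * Sg) (p ^ N.factorization p) : ℤ) : ℝ) := by
      rw [hfac]
      push_cast
      rfl
    have step2 : (((β * Sg) N : ℤ) : ℝ)
        ≤ ∏ p ∈ N.primeFactors,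
          Real.sqrt ((p : ℝ) ^ N.factorization p) * (((p : ℝ) - 1) / p) ^ 2 := by
      rw [step1]
      apply Finset.prod_le_prod
      · intro p hp
        exact_mod_cast (hbounds p hp).1
      · intro p hp
        exact (hbounds p hp).2
    have step3 : ∏ p ∈ N.primeFactors,
          Real.sqrt ((p : ℝ) ^ N.factorization p) * (((p : ℝ) - 1) / p) ^ 2
        = Real.sqrt N * ∏ p ∈ N.primeFactors, (((p : ℝ) - 1) / p) ^ 2 := by
      rw [Finset.prod_mul_distrib,
        sqrt_prod (fun p => (p : ℝ) ^ N.factorization p)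
          (fun p hp => by positivity), hNprod]
    have hQ : ∏ p ∈ N.primeFactors, (1 + 1 / ((p : ℝ) - 1))
        = ∏ p ∈ N.primeFactors, (p : ℝ) / ((p : ℝ) - 1) := by
      apply Finset.prod_congr rfl
      intro p hp
      have h1p : (1 : ℝ) < (p : ℝ) := hpos p hp
      have hne : (p : ℝ) - 1 ≠ 0 := by linarith
      field_simp
      ring
    have step4 : ∏ p ∈ N.primeFactors, (((p : ℝ) - 1) / p) ^ 2
        = ((∏ p ∈ N.primeFactors, (p : ℝ) / ((p : ℝ) - 1))⁻¹) ^ 2 := by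
      rw [← Finset.prod_inv_distrib, ← Finset.prod_pow]
      apply Finset.prod_congr rfl
      intro p hp
      rw [inv_div]
    calc (((β * Sg) N : ℤ) : ℝ)
        ≤ ∏ p ∈ N.primeFactors,
          Real.sqrt ((p : ℝ) ^ N.factorization p) * (((p : ℝ) - 1) / p) ^ 2 := step2
      _ = Real.sqrt N * ∏ p ∈ N.primeFactors, (((p : ℝ) - 1) / p) ^ 2 := step3
      _ = Real.sqrt N / (∏ p ∈ N.primeFactors, (1 + 1 / ((p : ℝ) - 1))) ^ 2 := by
          rw [step4, hQ, inv_pow, div_eq_mul_inv]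
end
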